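/- Let $T = \begin{pmatrix}1 & 2\\ 0 & 1\end{pmatrix}$ and let $c > 0$. Then $\|cT - I\| > 1$, where $\|\cdot\|$ denotes the operator norm on $M_2(\mathbb{C})$. -/

import Mathlib

open Matrix
open scoped Matrix.Norms.L2Operator

/-- For `T = [[1,2],[0,1]]` and every `c > 0`, the operator norm of `cT - I` exceeds `1`. -/
theorem stmt_14 (c : ℝ) (hc : 0 < c) :
    1 < ‖(c : ℂ) • (!![1, 2; 0, 1] : Matrix (Fin 2) (Fin 2) ℂ) - 1‖ := by
  set A : Matrix (Fin 2) (Fin 2) ℂ := (c : ℂ) • (!![1, 2; 0, 1]) - 1 with hA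
  by_contra h
  push_neg at h
  set v : EuclideanSpace ℂ (Fin 2) := WithLp.toLp 2 ![1, -1] with hv
  have hAv : A *ᵥ (v : Fin 2 → ℂ) = (![-((c:ℂ)+1), 1-(c:ℂ)] : Fin 2 → ℂ) := by
    funext i
    fin_cases i <;>
      simp [hA, hv, Matrix.mulVec, dotProduct, Fin.sum_univ_two, Matrix.one_apply] <;>
      ring
  have key := A.l2_opNorm_mulVec v
  have hvnorm : ‖v‖ = Real.sqrt 2 := by
    simp [EuclideanSpace.norm_eq, hv, Fin.sum_univ_two]
    norm_num
  have hAvnorm : ‖(EuclideanSpace.equiv (Fin 2) ℂ).symm (A *ᵥ v)‖ = Real.sqrt (2*c^2 + 2) := by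
    rw [EuclideanSpace.norm_eq]
    have h0 : (A *ᵥ (v : Fin 2 → ℂ)) 0 = -(c+1) := by rw [hAv]; rfl
    have h1 : (A *ᵥ (v : Fin 2 → ℂ)) 1 = 1-c := by rw [hAv]; rfl
    rw [Fin.sum_univ_two]
    rw [show ((EuclideanSpace.equiv (Fin 2) ℂ).symm (A *ᵥ v) 0) = -((c:ℂ)+1) from h0,
        show ((EuclideanSpace.equiv (Fin 2) ℂ).symm (A *ᵥ v) 1) = 1-(c:ℂ) from h1]
    congr 1
    rw [norm_neg]
    have hc1 : ‖(c:ℂ)+1‖ = c + 1 := by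
      rw [show (c:ℂ)+1 = ((c+1 : ℝ) : ℂ) by push_cast; ring, Complex.norm_real,
        Real.norm_eq_abs, abs_of_pos (by linarith)]
    have hc2 : ‖1-(c:ℂ)‖ = |1 - c| := by
      rw [show 1-(c:ℂ) = ((1-c : ℝ) : ℂ) by push_cast; ring, Complex.norm_real, Real.norm_eq_abs]
    rw [hc1, hc2]
    rw [sq_abs]
    ring
  rw [hAvnorm, hvnorm] at key
  have hle : Real.sqrt (2*c^2+2) ≤ Real.sqrt 2 := by
    calc Real.sqrt (2*c^2+2) ≤ ‖A‖ * Real.sqrt 2 := key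
    _ ≤ 1 * Real.sqrt 2 := by
        apply mul_le_mul_of_nonneg_right h (Real.sqrt_nonneg _)
    _ = Real.sqrt 2 := one_mul _
  have h2 : 2*c^2+2 ≤ 2 := by
    nlinarith [Real.sq_sqrt (show (0:ℝ) ≤ 2*c^2+2 by positivity),
      Real.sq_sqrt (show (0:ℝ) ≤ 2 by norm_num),
      Real.sqrt_nonneg (2*c^2+2), Real.sqrt_nonneg 2, hle]
  nlinarith
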